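/- Validity criterion via continuity. In the piecewise monotone setting, the φ-expansion is valid if and only if φ̄_∞ is well-defined on all of A^ℕ, the map φ̄_∞ : A^ℕ → [0,1] is continuous (A^ℕ carrying the product topology), and there exist strings x⁺, x⁻ ∈ A^ℕ with φ̄_∞(x⁺) = 1 and φ̄_∞(x⁻) = 0. -/

import Mathlib

open Set Filter Topology

/-- A piecewise monotone dynamical system on `[0,1]`: partition points
`0 = a 0 < a 1 < ⋯ < a k = 1` (`k ≥ 2`), branch intervals `I j = (a j, a (j+1))`,
on each of which `f j` is a continuous strictly monotone map into `[0,1]` with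
inverse `g j`; `inc j` records whether `f j` is increasing; the covering condition
`(⋃ᵢ Jᵢ) ∩ I j = I j` (i.e. `I j ⊆ ⋃ᵢ Jᵢ`) holds, where `J i = f i '' I i`. -/
structure PMS where
  k : ℕ
  a : ℕ → ℝ
  f : ℕ → ℝ → ℝ
  g : ℕ → ℝ → ℝ
  inc : ℕ → Bool
  two_le_k : 2 ≤ k
  a_zero : a 0 = 0
  a_last : a k = 1
  a_mono : ∀ i j, i < j → j ≤ k → a i < a j
  f_cont : ∀ j, j < k → ContinuousOn (f j) (Icc (a j) (a (j + 1)))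
  f_mono : ∀ j, j < k → inc j = true → StrictMonoOn (f j) (Icc (a j) (a (j + 1)))
  f_anti : ∀ j, j < k → inc j = false → StrictAntiOn (f j) (Icc (a j) (a (j + 1)))
  f_range : ∀ j, j < k → MapsTo (f j) (Icc (a j) (a (j + 1))) (Icc (0 : ℝ) 1)
  g_inv : ∀ j, j < k → ∀ t ∈ Icc (a j) (a (j + 1)), g j (f j t) = t
  cover : ∀ j, j < k →
    Ioo (a j) (a (j + 1)) ⊆ ⋃ i ∈ Finset.range k, f i '' Ioo (a i) (a (i + 1))

namespace PMS

/-- The open branch interval `I j = (a j, a (j+1))`. -/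
def I (P : PMS) (j : ℕ) : Set ℝ := Ioo (P.a j) (P.a (j + 1))

open Classical in
/-- The index of the branch interval containing `x` (junk value `0` if there is none). -/
noncomputable def idx (P : PMS) (x : ℝ) : ℕ :=
  if h : ∃ j, j < P.k ∧ x ∈ P.I j then h.choose else 0

open Classical in
/-- The dynamics: `T x = f j x` for `x ∈ I j` (junk value `0` on `S₀`, where `T` is
left undefined in the paper). -/
noncomputable def T (P : PMS) (x : ℝ) : ℝ :=
  if ∃ j, j < P.k ∧ x ∈ P.I j then P.f (P.idx x) x else 0

/-- `S₀ = [0,1] ∖ ⋃ⱼ I j`. -/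
def S0 (P : PMS) : Set ℝ := Icc 0 1 \ ⋃ j ∈ Finset.range P.k, P.I j

/-- The singular set `S`: points whose orbit hits `S₀`. -/
def S (P : PMS) : Set ℝ :=
  {x ∈ Icc (0 : ℝ) 1 | ∃ m, P.T^[m] x ∈ P.S0 ∧ ∀ i, i < m → P.T^[i] x ∉ P.S0}

/-- The coding map (itinerary): `(code x) n = j` iff `Tⁿ x ∈ I j` (for `x ∈ [0,1] ∖ S`). -/
noncomputable def code (P : PMS) (x : ℝ) : ℕ → ℕ := fun n => P.idx (P.T^[n] x)

/-- The map `φ̄` on `[0,k]` as a function of `j ∈ A` and `t ∈ [0,1]`, a point of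
`[j, j+1]` being written `j + t`. -/
noncomputable def phibarJ (P : PMS) (j : ℕ) (t : ℝ) : ℝ :=
  if P.inc j then
    if t ≤ P.f j (P.a j) then P.a j
    else if P.f j (P.a (j + 1)) ≤ t then P.a (j + 1)
    else P.g j t
  else
    if t ≤ P.f j (P.a (j + 1)) then P.a (j + 1)
    else if P.f j (P.a j) ≤ t then P.a j
    else P.g j t

/-- `φ̄ₙ(x) = φ̄(x₀ + φ̄(x₁ + ⋯ + φ̄(x_{n-1})⋯))`. -/
noncomputable def phibarN (P : PMS) : ℕ → (ℕ → ℕ) → ℝ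
  | 0, _ => 0
  | n + 1, x => P.phibarJ (x 0) (P.phibarN n fun i => x (i + 1))

/-- `φ̄_∞(x) = limₙ φ̄ₙ(x)` (a junk value where the limit does not exist). -/
noncomputable def phibarInf (P : PMS) (x : ℕ → ℕ) : ℝ :=
  limUnder atTop fun n => P.phibarN n x

/-- The φ-expansion is well-defined: `limₙ φ̄ₙ(x)` exists for every string `x ∈ A^ℕ`. -/
def WellDefined (P : PMS) : Prop :=
  ∀ x : ℕ → ℕ, (∀ n, x n < P.k) →
    ∃ L : ℝ, Tendsto (fun n => P.phibarN n x) atTop (𝓝 L)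

/-- The φ-expansion is valid: for every `x ∈ [0,1] ∖ S`, `limₙ φ̄ₙ(i(x)) = x`. -/
def Valid (P : PMS) : Prop :=
  ∀ x ∈ Icc (0 : ℝ) 1 \ P.S,
    Tendsto (fun n => P.phibarN n (P.code x)) atTop (𝓝 x)

end PMS

namespace PMS

/-! ### Basic lemmas -/

lemma a_lt (P : PMS) {j : ℕ} (hj : j < P.k) : P.a j < P.a (j + 1) :=
  P.a_mono j (j + 1) (Nat.lt_succ_self j) hj

lemma a_nonneg (P : PMS) {j : ℕ} (hj : j ≤ P.k) : 0 ≤ P.a j := by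
  rcases Nat.eq_zero_or_pos j with h | h
  · simp [h, P.a_zero]
  · rw [← P.a_zero]; exact le_of_lt (P.a_mono 0 j h hj)

lemma a_le_one (P : PMS) {j : ℕ} (hj : j ≤ P.k) : P.a j ≤ 1 := by
  rcases eq_or_lt_of_le hj with h | h
  · rw [h, P.a_last]
  · rw [← P.a_last]; exact le_of_lt (P.a_mono j P.k h le_rfl)

lemma Icc_subset_unit (P : PMS) {j : ℕ} (hj : j < P.k) :
    Icc (P.a j) (P.a (j + 1)) ⊆ Icc (0 : ℝ) 1 :=
  Icc_subset_Icc (P.a_nonneg hj.le) (P.a_le_one hj)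

lemma I_subset_unit (P : PMS) {j : ℕ} (hj : j < P.k) : P.I j ⊆ Icc (0 : ℝ) 1 :=
  fun z hz => P.Icc_subset_unit hj (Ioo_subset_Icc_self hz)

lemma mem_I_unique (P : PMS) {i j : ℕ} (hi : i < P.k) (hj : j < P.k) {z : ℝ}
    (hzi : z ∈ P.I i) (hzj : z ∈ P.I j) : i = j := by
  by_contra hne
  rcases Nat.lt_or_ge i j with h | h
  · have h1 : P.a (i + 1) ≤ P.a j := by
      rcases Nat.lt_or_ge (i + 1) j with hl | hge
      · exact le_of_lt (P.a_mono (i + 1) j hl hj.le)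
      · have : i + 1 = j := le_antisymm h hge
        rw [this]
    exact absurd (hzi.2.trans_le (h1.trans hzj.1.le)) (lt_irrefl z)
  · have h : j < i := lt_of_le_of_ne h (Ne.symm hne)
    have h1 : P.a (j + 1) ≤ P.a i := by
      rcases Nat.lt_or_ge (j + 1) i with hl | hge
      · exact le_of_lt (P.a_mono (j + 1) i hl hi.le)
      · have : j + 1 = i := le_antisymm h hge
        rw [this]
    exact absurd (hzj.2.trans_le (h1.trans hzi.1.le)) (lt_irrefl z)

lemma idx_eq (P : PMS) {j : ℕ} (hj : j < P.k) {z : ℝ} (hz : z ∈ P.I j) :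
    P.idx z = j := by
  have h : ∃ i, i < P.k ∧ z ∈ P.I i := ⟨j, hj, hz⟩
  rw [idx, dif_pos h]
  exact P.mem_I_unique h.choose_spec.1 hj h.choose_spec.2 hz

lemma T_eq (P : PMS) {j : ℕ} (hj : j < P.k) {z : ℝ} (hz : z ∈ P.I j) :
    P.T z = P.f j z := by
  have h : ∃ i, i < P.k ∧ z ∈ P.I i := ⟨j, hj, hz⟩
  rw [T, if_pos h, P.idx_eq hj hz]

lemma mem_I_of_not_S0 (P : PMS) {z : ℝ} (hz : z ∈ Icc (0 : ℝ) 1) (hz0 : z ∉ P.S0) :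
    ∃ j, j < P.k ∧ z ∈ P.I j := by
  have : z ∈ ⋃ j ∈ Finset.range P.k, P.I j := by
    by_contra h
    exact hz0 ⟨hz, h⟩
  simp only [mem_iUnion, Finset.mem_range, exists_prop] at this
  exact this

lemma not_S0_of_mem_I (P : PMS) {j : ℕ} (hj : j < P.k) {z : ℝ} (hz : z ∈ P.I j) :
    z ∉ P.S0 := by
  intro h
  exact h.2 (by simp only [mem_iUnion, Finset.mem_range, exists_prop]; exact ⟨j, hj, hz⟩)

/-! ### phibarJ lemmas -/

section phibarJ

variable (P : PMS) {j : ℕ}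

lemma fa_lt_fb (hj : j < P.k) (hi : P.inc j = true) :
    P.f j (P.a j) < P.f j (P.a (j + 1)) :=
  P.f_mono j hj hi (left_mem_Icc.2 (P.a_lt hj).le) (right_mem_Icc.2 (P.a_lt hj).le)
    (P.a_lt hj)

lemma fb_lt_fa (hj : j < P.k) (hi : P.inc j = false) :
    P.f j (P.a (j + 1)) < P.f j (P.a j) :=
  P.f_anti j hj hi (left_mem_Icc.2 (P.a_lt hj).le) (right_mem_Icc.2 (P.a_lt hj).le)
    (P.a_lt hj)

lemma fa_mem (hj : j < P.k) : P.f j (P.a j) ∈ Icc (0 : ℝ) 1 :=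
  P.f_range j hj (left_mem_Icc.2 (P.a_lt hj).le)

lemma fb_mem (hj : j < P.k) : P.f j (P.a (j + 1)) ∈ Icc (0 : ℝ) 1 :=
  P.f_range j hj (right_mem_Icc.2 (P.a_lt hj).le)

/-- In the strict middle range, `phibarJ` inverts `f`. -/
lemma phibarJ_middle_inc (hj : j < P.k) (hi : P.inc j = true) {t : ℝ}
    (h1 : P.f j (P.a j) < t) (h2 : t < P.f j (P.a (j + 1))) :
    ∃ s ∈ Icc (P.a j) (P.a (j + 1)), P.f j s = t ∧ P.phibarJ j t = s := by
  have hIVT : Icc (P.f j (P.a j)) (P.f j (P.a (j + 1))) ⊆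
      P.f j '' Icc (P.a j) (P.a (j + 1)) :=
    intermediate_value_Icc (P.a_lt hj).le (P.f_cont j hj)
  obtain ⟨s, hs, hfs⟩ := hIVT ⟨h1.le, h2.le⟩
  refine ⟨s, hs, hfs, ?_⟩
  rw [phibarJ, if_pos hi, if_neg (not_le.2 h1), if_neg (not_le.2 h2), ← hfs,
    P.g_inv j hj s hs]

lemma phibarJ_middle_dec (hj : j < P.k) (hi : P.inc j = false) {t : ℝ}
    (h1 : P.f j (P.a (j + 1)) < t) (h2 : t < P.f j (P.a j)) :
    ∃ s ∈ Icc (P.a j) (P.a (j + 1)), P.f j s = t ∧ P.phibarJ j t = s := by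
  have hIVT : Icc (P.f j (P.a (j + 1))) (P.f j (P.a j)) ⊆
      P.f j '' Icc (P.a j) (P.a (j + 1)) :=
    intermediate_value_Icc' (P.a_lt hj).le (P.f_cont j hj)
  obtain ⟨s, hs, hfs⟩ := hIVT ⟨h1.le, h2.le⟩
  refine ⟨s, hs, hfs, ?_⟩
  rw [phibarJ, if_neg (by simp [hi]), if_neg (not_le.2 h1), if_neg (not_le.2 h2), ← hfs,
    P.g_inv j hj s hs]

lemma phibarJ_mem (hj : j < P.k) (t : ℝ) :
    P.phibarJ j t ∈ Icc (P.a j) (P.a (j + 1)) := by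
  have hab := (P.a_lt hj).le
  cases hb : P.inc j with
  | true =>
    rcases le_or_gt t (P.f j (P.a j)) with h1 | h1
    · rw [phibarJ, if_pos hb, if_pos h1]; exact left_mem_Icc.2 hab
    rcases le_or_gt (P.f j (P.a (j + 1))) t with h2 | h2
    · rw [phibarJ, if_pos hb, if_neg (not_le.2 h1), if_pos h2]; exact right_mem_Icc.2 hab
    · obtain ⟨s, hs, _, he⟩ := P.phibarJ_middle_inc hj hb h1 h2
      rw [he]; exact hs
  | false =>
    rcases le_or_gt t (P.f j (P.a (j + 1))) with h1 | h1
    · rw [phibarJ, if_neg (by simp [hb]), if_pos h1]; exact right_mem_Icc.2 hab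
    rcases le_or_gt (P.f j (P.a j)) t with h2 | h2
    · rw [phibarJ, if_neg (by simp [hb]), if_neg (not_le.2 h1), if_pos h2]
      exact left_mem_Icc.2 hab
    · obtain ⟨s, hs, _, he⟩ := P.phibarJ_middle_dec hj hb h1 h2
      rw [he]; exact hs

lemma phibarJ_mem_unit (hj : j < P.k) (t : ℝ) : P.phibarJ j t ∈ Icc (0 : ℝ) 1 :=
  P.Icc_subset_unit hj (P.phibarJ_mem hj t)

lemma phibarJ_f (hj : j < P.k) {z : ℝ} (hz : z ∈ P.I j) :
    P.phibarJ j (P.f j z) = z := by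
  have hzc : z ∈ Icc (P.a j) (P.a (j + 1)) := Ioo_subset_Icc_self hz
  cases hb : P.inc j with
  | true =>
    have h1 : P.f j (P.a j) < P.f j z :=
      P.f_mono j hj hb (left_mem_Icc.2 (P.a_lt hj).le) hzc hz.1
    have h2 : P.f j z < P.f j (P.a (j + 1)) :=
      P.f_mono j hj hb hzc (right_mem_Icc.2 (P.a_lt hj).le) hz.2
    rw [phibarJ, if_pos hb, if_neg (not_le.2 h1), if_neg (not_le.2 h2),
      P.g_inv j hj z hzc]
  | false =>
    have h1 : P.f j (P.a (j + 1)) < P.f j z :=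
      P.f_anti j hj hb hzc (right_mem_Icc.2 (P.a_lt hj).le) hz.2
    have h2 : P.f j z < P.f j (P.a j) :=
      P.f_anti j hj hb (left_mem_Icc.2 (P.a_lt hj).le) hzc hz.1
    rw [phibarJ, if_neg (by simp [hb]), if_neg (not_le.2 h1), if_neg (not_le.2 h2),
      P.g_inv j hj z hzc]

lemma phibarJ_zero_inc (hj : j < P.k) (hi : P.inc j = true) :
    P.phibarJ j 0 = P.a j := by
  rw [phibarJ, if_pos hi, if_pos (P.fa_mem hj).1]

lemma phibarJ_one_inc (hj : j < P.k) (hi : P.inc j = true) :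
    P.phibarJ j 1 = P.a (j + 1) := by
  have h1 : ¬(1 : ℝ) ≤ P.f j (P.a j) :=
    not_le.2 ((P.fa_lt_fb hj hi).trans_le (P.fb_mem hj).2)
  rw [phibarJ, if_pos hi, if_neg h1, if_pos (P.fb_mem hj).2]

lemma phibarJ_zero_dec (hj : j < P.k) (hi : P.inc j = false) :
    P.phibarJ j 0 = P.a (j + 1) := by
  rw [phibarJ, if_neg (by simp [hi]), if_pos (P.fb_mem hj).1]

lemma phibarJ_one_dec (hj : j < P.k) (hi : P.inc j = false) :
    P.phibarJ j 1 = P.a j := by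
  have h1 : ¬(1 : ℝ) ≤ P.f j (P.a (j + 1)) :=
    not_le.2 ((P.fb_lt_fa hj hi).trans_le (P.fa_mem hj).2)
  rw [phibarJ, if_neg (by simp [hi]), if_neg h1, if_pos (P.fa_mem hj).2]

lemma phibarJ_monotone (hj : j < P.k) (hi : P.inc j = true) :
    Monotone (P.phibarJ j) := by
  intro t₁ t₂ h
  rcases le_or_gt t₁ (P.f j (P.a j)) with h1 | h1
  · rw [phibarJ, if_pos hi, if_pos h1]
    exact (P.phibarJ_mem hj t₂).1
  rcases le_or_gt (P.f j (P.a (j + 1))) t₁ with h2 | h2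
  · have h2' : P.f j (P.a (j + 1)) ≤ t₂ := h2.trans h
    have h1' : ¬ t₂ ≤ P.f j (P.a j) := not_le.2 ((P.fa_lt_fb hj hi).trans_le h2')
    conv_rhs => rw [phibarJ, if_pos hi, if_neg h1', if_pos h2']
    exact (P.phibarJ_mem hj t₁).2
  obtain ⟨s₁, hs₁, hf₁, he₁⟩ := P.phibarJ_middle_inc hj hi h1 h2
  rw [he₁]
  rcases le_or_gt (P.f j (P.a (j + 1))) t₂ with h2' | h2'
  · have h1' : ¬ t₂ ≤ P.f j (P.a j) := not_le.2 ((P.fa_lt_fb hj hi).trans_le h2')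
    rw [phibarJ, if_pos hi, if_neg h1', if_pos h2']
    exact hs₁.2
  · have h1' : P.f j (P.a j) < t₂ := h1.trans_le h
    obtain ⟨s₂, hs₂, hf₂, he₂⟩ := P.phibarJ_middle_inc hj hi h1' h2'
    rw [he₂]
    exact ((P.f_mono j hj hi).le_iff_le hs₁ hs₂).1 (by rw [hf₁, hf₂]; exact h)

lemma phibarJ_antitone (hj : j < P.k) (hi : P.inc j = false) :
    Antitone (P.phibarJ j) := by
  intro t₁ t₂ h
  rcases le_or_gt t₁ (P.f j (P.a (j + 1))) with h1 | h1
  · conv_rhs => rw [phibarJ, if_neg (by simp [hi]), if_pos h1]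
    exact (P.phibarJ_mem hj t₂).2
  rcases le_or_gt (P.f j (P.a j)) t₁ with h2 | h2
  · have h2' : P.f j (P.a j) ≤ t₂ := h2.trans h
    have h1' : ¬ t₂ ≤ P.f j (P.a (j + 1)) := not_le.2 ((P.fb_lt_fa hj hi).trans_le h2')
    conv_lhs => rw [phibarJ, if_neg (by simp [hi]), if_neg h1', if_pos h2']
    exact (P.phibarJ_mem hj t₁).1
  obtain ⟨s₁, hs₁, hf₁, he₁⟩ := P.phibarJ_middle_dec hj hi h1 h2
  rw [he₁]
  rcases le_or_gt (P.f j (P.a j)) t₂ with h2' | h2'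
  · have h1' : ¬ t₂ ≤ P.f j (P.a (j + 1)) := not_le.2 ((P.fb_lt_fa hj hi).trans_le h2')
    rw [phibarJ, if_neg (by simp [hi]), if_neg h1', if_pos h2']
    exact hs₁.1
  · have h1' : P.f j (P.a (j + 1)) < t₂ := h1.trans_le h
    obtain ⟨s₂, hs₂, hf₂, he₂⟩ := P.phibarJ_middle_dec hj hi h1' h2'
    rw [he₂]
    exact ((P.f_anti j hj hi).le_iff_ge hs₁ hs₂).1 (by rw [hf₁, hf₂]; exact h)

end phibarJ

/-! ### Continuity of phibarJ -/

lemma phibarJ_continuous (P : PMS) {j : ℕ} (hj : j < P.k) :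
    Continuous (P.phibarJ j) := by
  cases hb : P.inc j with
  | true =>
    have hab := P.fa_lt_fb hj hb
    have hsub : ∀ c : ℝ, Monotone fun t : ℝ => t - c :=
      fun c a b h => sub_le_sub_right h c
    have hmax : Monotone fun t : ℝ => max (t - P.f j (P.a (j + 1))) 0 :=
      Monotone.max (hsub _) monotone_const
    have hmin : Monotone fun t : ℝ => min (t - P.f j (P.a j)) 0 :=
      Monotone.min (hsub _) monotone_const
    have hc2 : Continuous fun t : ℝ =>
        max (t - P.f j (P.a (j + 1))) 0 + min (t - P.f j (P.a j)) 0 := by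
      fun_prop
    have key : Continuous fun t : ℝ => P.phibarJ j t +
        (max (t - P.f j (P.a (j + 1))) 0 + min (t - P.f j (P.a j)) 0) := by
      apply Monotone.continuous_of_surjective
      · exact (P.phibarJ_monotone hj hb).add (hmax.add hmin)
      · intro y
        rcases le_or_gt y (P.a j) with hy | hy
        · refine ⟨P.f j (P.a j) + (y - P.a j), ?_⟩
          have ht : P.f j (P.a j) + (y - P.a j) ≤ P.f j (P.a j) := by linarith
          have h1 : P.phibarJ j (P.f j (P.a j) + (y - P.a j)) = P.a j := by
            rw [phibarJ, if_pos hb, if_pos ht]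
          have h2 : max (P.f j (P.a j) + (y - P.a j) - P.f j (P.a (j + 1))) 0 = 0 :=
            max_eq_right (by linarith)
          have h3 : min (P.f j (P.a j) + (y - P.a j) - P.f j (P.a j)) 0
              = P.f j (P.a j) + (y - P.a j) - P.f j (P.a j) :=
            min_eq_left (by linarith)
          beta_reduce
          rw [h1, h2, h3]; ring
        rcases le_or_gt (P.a (j + 1)) y with hy' | hy'
        · refine ⟨P.f j (P.a (j + 1)) + (y - P.a (j + 1)), ?_⟩
          have ht : P.f j (P.a (j + 1)) ≤ P.f j (P.a (j + 1)) + (y - P.a (j + 1)) := by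
            linarith
          have h1 : P.phibarJ j (P.f j (P.a (j + 1)) + (y - P.a (j + 1)))
              = P.a (j + 1) := by
            rw [phibarJ, if_pos hb, if_neg (by push_neg; linarith), if_pos ht]
          have h2 : max (P.f j (P.a (j + 1)) + (y - P.a (j + 1)) - P.f j (P.a (j + 1))) 0
              = P.f j (P.a (j + 1)) + (y - P.a (j + 1)) - P.f j (P.a (j + 1)) :=
            max_eq_left (by linarith)
          have h3 : min (P.f j (P.a (j + 1)) + (y - P.a (j + 1)) - P.f j (P.a j)) 0
              = 0 := min_eq_right (by linarith)
          beta_reduce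
          rw [h1, h2, h3]; ring
        · refine ⟨P.f j y, ?_⟩
          have hyI : y ∈ P.I j := ⟨hy, hy'⟩
          have hyc : y ∈ Icc (P.a j) (P.a (j + 1)) := Ioo_subset_Icc_self hyI
          have hl : P.f j (P.a j) < P.f j y :=
            P.f_mono j hj hb (left_mem_Icc.2 (P.a_lt hj).le) hyc hy
          have hr : P.f j y < P.f j (P.a (j + 1)) :=
            P.f_mono j hj hb hyc (right_mem_Icc.2 (P.a_lt hj).le) hy'
          beta_reduce
          rw [P.phibarJ_f hj hyI, max_eq_right (by linarith), min_eq_right (by linarith)]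
          ring
    have : P.phibarJ j = fun t : ℝ => (P.phibarJ j t +
        (max (t - P.f j (P.a (j + 1))) 0 + min (t - P.f j (P.a j)) 0)) -
        (max (t - P.f j (P.a (j + 1))) 0 + min (t - P.f j (P.a j)) 0) := by
      funext t; ring
    rw [this]
    exact key.sub hc2
  | false =>
    have hab := P.fb_lt_fa hj hb
    have hc2 : Continuous fun t : ℝ =>
        max (t - P.f j (P.a j)) 0 + min (t - P.f j (P.a (j + 1))) 0 := by
      fun_prop
    have hanti : Antitone fun t : ℝ => P.phibarJ j t -
        (max (t - P.f j (P.a j)) 0 + min (t - P.f j (P.a (j + 1))) 0) := by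
      intro t₁ t₂ h
      have h1 := P.phibarJ_antitone hj hb h
      have h2 : max (t₁ - P.f j (P.a j)) 0 ≤ max (t₂ - P.f j (P.a j)) 0 :=
        max_le_max (by linarith) le_rfl
      have h3 : min (t₁ - P.f j (P.a (j + 1))) 0 ≤ min (t₂ - P.f j (P.a (j + 1))) 0 :=
        min_le_min (by linarith) le_rfl
      beta_reduce
      linarith
    have hsurj : Function.Surjective fun t : ℝ => P.phibarJ j t -
        (max (t - P.f j (P.a j)) 0 + min (t - P.f j (P.a (j + 1))) 0) := by
      intro y
      rcases le_or_gt y (P.a j) with hy | hy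
      · refine ⟨P.f j (P.a j) + (P.a j - y), ?_⟩
        have h1 : P.phibarJ j (P.f j (P.a j) + (P.a j - y)) = P.a j := by
          rw [phibarJ, if_neg (by simp [hb]), if_neg (by push_neg; linarith),
            if_pos (by linarith)]
        beta_reduce
        rw [h1, max_eq_left (by linarith), min_eq_right (by linarith)]
        ring
      rcases le_or_gt (P.a (j + 1)) y with hy' | hy'
      · refine ⟨P.f j (P.a (j + 1)) - (y - P.a (j + 1)), ?_⟩
        have h1 : P.phibarJ j (P.f j (P.a (j + 1)) - (y - P.a (j + 1)))
            = P.a (j + 1) := by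
          rw [phibarJ, if_neg (by simp [hb]), if_pos (by linarith)]
        beta_reduce
        rw [h1, max_eq_right (by linarith), min_eq_left (by linarith)]
        ring
      · refine ⟨P.f j y, ?_⟩
        have hyI : y ∈ P.I j := ⟨hy, hy'⟩
        have hyc : y ∈ Icc (P.a j) (P.a (j + 1)) := Ioo_subset_Icc_self hyI
        have hl : P.f j (P.a (j + 1)) < P.f j y :=
          P.f_anti j hj hb hyc (right_mem_Icc.2 (P.a_lt hj).le) hy'
        have hr : P.f j y < P.f j (P.a j) :=
          P.f_anti j hj hb (left_mem_Icc.2 (P.a_lt hj).le) hyc hy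
        beta_reduce
        rw [P.phibarJ_f hj hyI, max_eq_right (by linarith), min_eq_right (by linarith)]
        ring
    have hmono : Monotone fun t : ℝ => (fun s : ℝ => P.phibarJ j s -
        (max (s - P.f j (P.a j)) 0 + min (s - P.f j (P.a (j + 1))) 0)) (-t) :=
      fun t₁ t₂ h => hanti (neg_le_neg h)
    have hsurj2 : Function.Surjective fun t : ℝ => (fun s : ℝ => P.phibarJ j s -
        (max (s - P.f j (P.a j)) 0 + min (s - P.f j (P.a (j + 1))) 0)) (-t) :=
      hsurj.comp neg_surjective
    have hcont2 := hmono.continuous_of_surjective hsurj2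
    have hcont : Continuous fun s : ℝ => P.phibarJ j s -
        (max (s - P.f j (P.a j)) 0 + min (s - P.f j (P.a (j + 1))) 0) := by
      have : (fun s : ℝ => P.phibarJ j s -
          (max (s - P.f j (P.a j)) 0 + min (s - P.f j (P.a (j + 1))) 0)) =
          (fun t : ℝ => (fun s : ℝ => P.phibarJ j s -
          (max (s - P.f j (P.a j)) 0 + min (s - P.f j (P.a (j + 1))) 0)) (-t)) ∘
          (fun s : ℝ => -s) := by
        funext s; simp
      rw [this]
      exact hcont2.comp continuous_neg
    have : P.phibarJ j = fun t : ℝ => (P.phibarJ j t -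
        (max (t - P.f j (P.a j)) 0 + min (t - P.f j (P.a (j + 1))) 0)) +
        (max (t - P.f j (P.a j)) 0 + min (t - P.f j (P.a (j + 1))) 0) := by
      funext t; ring
    rw [this]
    exact hcont.add hc2

/-! ### The composition maps -/

/-- `comp n x` is the composition `phibarJ (x 0) ∘ ⋯ ∘ phibarJ (x (n-1))`. -/
noncomputable def comp (P : PMS) : ℕ → (ℕ → ℕ) → ℝ → ℝ
  | 0, _, t => t
  | n + 1, x, t => P.phibarJ (x 0) (P.comp n (fun i => x (i + 1)) t)

lemma comp_zero (P : PMS) (x : ℕ → ℕ) (t : ℝ) : P.comp 0 x t = t := rfl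

lemma comp_succ (P : PMS) (n : ℕ) (x : ℕ → ℕ) (t : ℝ) :
    P.comp (n + 1) x t = P.phibarJ (x 0) (P.comp n (fun i => x (i + 1)) t) := rfl

lemma phibarN_eq_comp (P : PMS) (n : ℕ) (x : ℕ → ℕ) :
    P.phibarN n x = P.comp n x 0 := by
  induction n generalizing x with
  | zero => rfl
  | succ n ih => rw [phibarN, comp_succ, ih]

lemma comp_congr (P : PMS) (n : ℕ) {x y : ℕ → ℕ} (h : ∀ i, i < n → x i = y i)
    (t : ℝ) : P.comp n x t = P.comp n y t := by
  induction n generalizing x y with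
  | zero => rfl
  | succ n ih =>
    rw [comp_succ, comp_succ, h 0 (Nat.succ_pos n),
      ih fun i hi => h (i + 1) (Nat.succ_lt_succ hi)]

lemma comp_add (P : PMS) (n m : ℕ) (x : ℕ → ℕ) :
    P.phibarN (n + m) x = P.comp n x (P.phibarN m fun i => x (n + i)) := by
  induction n generalizing x with
  | zero =>
    rw [Nat.zero_add, comp_zero]
    congr 1
    funext i
    rw [Nat.zero_add]
  | succ n ih =>
    have h1 : n + 1 + m = (n + m) + 1 := by omega
    have harg : (fun i => x (n + 1 + i)) = fun i => (fun i => x (i + 1)) (n + i) := by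
      funext i; congr 1; omega
    rw [h1, phibarN, ih, comp_succ, harg]

lemma comp_succ' (P : PMS) (n : ℕ) (x : ℕ → ℕ) (t : ℝ) :
    P.comp (n + 1) x t = P.comp n x (P.phibarJ (x n) t) := by
  induction n generalizing x with
  | zero => rfl
  | succ n ih =>
    rw [comp_succ, ih, comp_succ]

lemma comp_mono_or_anti (P : PMS) (n : ℕ) (x : ℕ → ℕ) (hx : ∀ i, i < n → x i < P.k) :
    Monotone (P.comp n x) ∨ Antitone (P.comp n x) := by
  induction n generalizing x with
  | zero => exact Or.inl monotone_id
  | succ n ih =>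
    have hx0 : x 0 < P.k := hx 0 (Nat.succ_pos n)
    have hrest := ih (fun i => x (i + 1)) (fun i hi => hx (i + 1) (Nat.succ_lt_succ hi))
    cases hb : P.inc (x 0) with
    | true =>
      rcases hrest with hm | ha
      · exact Or.inl fun t₁ t₂ h => (P.phibarJ_monotone hx0 hb) (hm h)
      · exact Or.inr fun t₁ t₂ h => (P.phibarJ_monotone hx0 hb) (ha h)
    | false =>
      rcases hrest with hm | ha
      · exact Or.inr fun t₁ t₂ h => (P.phibarJ_antitone hx0 hb) (hm h)
      · exact Or.inl fun t₁ t₂ h => (P.phibarJ_antitone hx0 hb) (ha h)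

lemma comp_mem_unit (P : PMS) (n : ℕ) (x : ℕ → ℕ) (hx : ∀ i, i < n → x i < P.k)
    {t : ℝ} (ht : t ∈ Icc (0 : ℝ) 1) : P.comp n x t ∈ Icc (0 : ℝ) 1 := by
  induction n generalizing x with
  | zero => exact ht
  | succ n ih =>
    rw [comp_succ]
    exact P.phibarJ_mem_unit (hx 0 (Nat.succ_pos n)) _

lemma phibarN_mem_unit (P : PMS) (n : ℕ) (x : ℕ → ℕ) (hx : ∀ i, i < n → x i < P.k) :
    P.phibarN n x ∈ Icc (0 : ℝ) 1 := by
  rw [phibarN_eq_comp]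
  exact P.comp_mem_unit n x hx (left_mem_Icc.2 zero_le_one)

lemma comp_between (P : PMS) (n : ℕ) (x : ℕ → ℕ) (hx : ∀ i, i < n → x i < P.k)
    {t : ℝ} (ht : t ∈ Icc (0 : ℝ) 1) :
    P.comp n x t ∈ Icc (min (P.comp n x 0) (P.comp n x 1))
      (max (P.comp n x 0) (P.comp n x 1)) := by
  rcases P.comp_mono_or_anti n x hx with hm | ha
  · exact ⟨(min_le_left _ _).trans (hm ht.1), (hm ht.2).trans (le_max_right _ _)⟩
  · exact ⟨(min_le_right _ _).trans (ha ht.2), (ha ht.1).trans (le_max_left _ _)⟩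

lemma comp_continuous (P : PMS) (n : ℕ) (x : ℕ → ℕ) (hx : ∀ i, i < n → x i < P.k) :
    Continuous (P.comp n x) := by
  induction n generalizing x with
  | zero => exact continuous_id
  | succ n ih =>
    have := (P.phibarJ_continuous (hx 0 (Nat.succ_pos n))).comp
      (ih (fun i => x (i + 1)) (fun i hi => hx (i + 1) (Nat.succ_lt_succ hi)))
    exact this

/-! ### Orbits avoiding S₀ -/

lemma not_S_iff (P : PMS) {y : ℝ} (hy : y ∈ Icc (0 : ℝ) 1) :
    y ∉ P.S ↔ ∀ m, P.T^[m] y ∉ P.S0 := by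
  constructor
  · intro h m
    by_contra hm
    have hex : ∃ m, P.T^[m] y ∈ P.S0 := ⟨m, hm⟩
    classical
    exact h ⟨hy, Nat.find hex, Nat.find_spec hex, fun i hi => Nat.find_min hex hi⟩
  · intro h hS
    obtain ⟨-, m, hm, -⟩ := hS
    exact h m hm

lemma iter_mem (P : PMS) {y : ℝ} (hy : y ∈ Icc (0 : ℝ) 1)
    (h : ∀ m, P.T^[m] y ∉ P.S0) : ∀ n, P.T^[n] y ∈ Icc (0 : ℝ) 1 := by
  intro n
  induction n with
  | zero => exact hy
  | succ n ih =>
    obtain ⟨j, hj, hI⟩ := P.mem_I_of_not_S0 ih (h n)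
    rw [Function.iterate_succ_apply', P.T_eq hj hI]
    exact P.f_range j hj (Ioo_subset_Icc_self hI)

lemma code_spec (P : PMS) {y : ℝ} (hy : y ∈ Icc (0 : ℝ) 1)
    (h : ∀ m, P.T^[m] y ∉ P.S0) (n : ℕ) :
    P.code y n < P.k ∧ P.T^[n] y ∈ P.I (P.code y n) := by
  obtain ⟨j, hj, hI⟩ := P.mem_I_of_not_S0 (P.iter_mem hy h n) (h n)
  have hc : P.code y n = j := P.idx_eq hj hI
  rw [hc]
  exact ⟨hj, hI⟩

lemma comp_code (P : PMS) {y : ℝ} (hy : y ∈ Icc (0 : ℝ) 1)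
    (h : ∀ m, P.T^[m] y ∉ P.S0) : ∀ n, P.comp n (P.code y) (P.T^[n] y) = y := by
  intro n
  induction n generalizing y with
  | zero => rfl
  | succ n ih =>
    obtain ⟨hj, hI⟩ := P.code_spec hy h 0
    have hI' : y ∈ P.I (P.code y 0) := hI
    have hTy : P.T y ∈ Icc (0 : ℝ) 1 := by
      have := P.iter_mem hy h 1
      rwa [Function.iterate_one] at this
    have hTm : ∀ m, P.T^[m] (P.T y) ∉ P.S0 := fun m => by
      rw [← Function.iterate_succ_apply]
      exact h (m + 1)
    have hcode : (fun i => P.code y (i + 1)) = P.code (P.T y) := by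
      funext i
      show P.idx (P.T^[i + 1] y) = P.idx (P.T^[i] (P.T y))
      rw [Function.iterate_succ_apply]
    rw [comp_succ, Function.iterate_succ_apply, hcode, ih hTy hTm]
    have hTf : P.T y = P.f (P.code y 0) y := P.T_eq hj hI'
    rw [hTf]
    exact P.phibarJ_f hj hI'

lemma code_lt (P : PMS) {y : ℝ} (hy : y ∈ Icc (0 : ℝ) 1)
    (h : ∀ m, P.T^[m] y ∉ P.S0) (n : ℕ) : P.code y n < P.k :=
  (P.code_spec hy h n).1

/-! ### Countability of S -/

lemma S0_finite (P : PMS) : P.S0.Finite := by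
  classical
  have hsub : P.S0 ⊆ P.a '' Iic P.k := by
    intro z hz
    obtain ⟨⟨hz0, hz1⟩, hzU⟩ := hz
    set Q : ℕ → Prop := fun i => P.a i ≤ z with hQ
    have h0 : Q 0 := by rw [hQ]; simp [P.a_zero, hz0]
    set j0 := Nat.findGreatest Q P.k with hj0
    have hj0le : j0 ≤ P.k := Nat.findGreatest_le _
    have hQj0 : Q j0 := Nat.findGreatest_spec (Nat.zero_le _) h0
    rcases eq_or_lt_of_le hj0le with hk | hk
    · refine ⟨j0, mem_Iic.2 hj0le, ?_⟩
      have : P.a j0 = 1 := by rw [hk, P.a_last]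
      linarith [hQj0]
    · have hnQ : ¬ Q (j0 + 1) :=
        Nat.findGreatest_is_greatest (Nat.lt_succ_self j0) hk
      have hzlt : z < P.a (j0 + 1) := not_le.1 hnQ
      have hznotI : z ∉ P.I j0 := by
        intro hzI
        apply hzU
        simp only [mem_iUnion, Finset.mem_range, exists_prop]
        exact ⟨j0, hk, hzI⟩
      have : z = P.a j0 := by
        by_contra hne
        exact hznotI ⟨lt_of_le_of_ne hQj0 (Ne.symm hne), hzlt⟩
      exact ⟨j0, mem_Iic.2 hj0le, this.symm⟩
  exact ((Set.finite_Iic P.k).image P.a).subset hsub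

lemma f_injOn_I (P : PMS) {j : ℕ} (hj : j < P.k) : InjOn (P.f j) (P.I j) := by
  cases hb : P.inc j with
  | true => exact ((P.f_mono j hj hb).injOn).mono Ioo_subset_Icc_self
  | false => exact ((P.f_anti j hj hb).injOn).mono Ioo_subset_Icc_self

lemma S_countable (P : PMS) : P.S.Countable := by
  classical
  have key : ∀ m, {y : ℝ | y ∈ Icc (0 : ℝ) 1 ∧ P.T^[m] y ∈ P.S0 ∧
      ∀ i, i < m → P.T^[i] y ∉ P.S0}.Countable := by
    intro m
    induction m with
    | zero => exact P.S0_finite.countable.mono fun y hy => hy.2.1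
    | succ m ih =>
      have hsub : {y : ℝ | y ∈ Icc (0 : ℝ) 1 ∧ P.T^[m + 1] y ∈ P.S0 ∧
          ∀ i, i < m + 1 → P.T^[i] y ∉ P.S0} ⊆
          ⋃ j ∈ Finset.range P.k, (P.I j ∩ P.f j ⁻¹'
            {z : ℝ | z ∈ Icc (0 : ℝ) 1 ∧ P.T^[m] z ∈ P.S0 ∧
              ∀ i, i < m → P.T^[i] z ∉ P.S0}) := by
        intro y hy
        obtain ⟨hy1, hy2, hy3⟩ := hy
        have hy0 : y ∉ P.S0 := hy3 0 (Nat.succ_pos m)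
        obtain ⟨j, hj, hI⟩ := P.mem_I_of_not_S0 hy1 hy0
        have hTf : P.T y = P.f j y := P.T_eq hj hI
        simp only [mem_iUnion, Finset.mem_range, exists_prop]
        refine ⟨j, hj, hI, ?_⟩
        refine ⟨?_, ?_, ?_⟩
        · exact P.f_range j hj (Ioo_subset_Icc_self hI)
        · rw [← hTf, ← Function.iterate_succ_apply]
          exact hy2
        · intro i hi
          rw [← hTf, ← Function.iterate_succ_apply]
          exact hy3 (i + 1) (Nat.succ_lt_succ hi)
      refine Set.Countable.mono hsub ?_
      refine Set.Countable.biUnion (Finset.range P.k).countable_toSet ?_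
      intro j hj'
      have hj : j < P.k := Finset.mem_range.1 hj'
      refine MapsTo.countable_of_injOn (f := P.f j) (fun z hz => hz.2)
        (InjOn.mono inter_subset_left (P.f_injOn_I hj)) ih
  have hsub : P.S ⊆ ⋃ m, {y : ℝ | y ∈ Icc (0 : ℝ) 1 ∧ P.T^[m] y ∈ P.S0 ∧
      ∀ i, i < m → P.T^[i] y ∉ P.S0} := by
    intro y hy
    obtain ⟨h1, m, h2, h3⟩ := hy
    exact mem_iUnion.2 ⟨m, h1, h2, h3⟩
  exact (Set.countable_iUnion key).mono hsub

/-! ### Interior orbit machinery -/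

lemma phibarJ_endpoints (P : PMS) {j : ℕ} (hj : j < P.k) :
    min (P.phibarJ j 0) (P.phibarJ j 1) = P.a j ∧
      max (P.phibarJ j 0) (P.phibarJ j 1) = P.a (j + 1) := by
  cases hb : P.inc j with
  | true =>
    rw [P.phibarJ_zero_inc hj hb, P.phibarJ_one_inc hj hb]
    exact ⟨min_eq_left (P.a_lt hj).le, max_eq_right (P.a_lt hj).le⟩
  | false =>
    rw [P.phibarJ_zero_dec hj hb, P.phibarJ_one_dec hj hb]
    exact ⟨min_eq_right (P.a_lt hj).le, max_eq_left (P.a_lt hj).le⟩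

lemma middle_step (P : PMS) {j : ℕ} (hj : j < P.k) {z u v : ℝ} (hz : z ∈ P.I j)
    (h1 : min (P.phibarJ j u) (P.phibarJ j v) < z)
    (h2 : z < max (P.phibarJ j u) (P.phibarJ j v)) :
    min u v < P.f j z ∧ P.f j z < max u v := by
  have hfz : P.phibarJ j (P.f j z) = z := P.phibarJ_f hj hz
  cases hb : P.inc j with
  | true =>
    have mono := P.phibarJ_monotone hj hb
    have key : ∀ w, P.phibarJ j w < z → w < P.f j z := by
      intro w hw
      by_contra hle
      push_neg at hle
      have h := mono hle
      rw [hfz] at h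
      exact absurd hw (not_lt.2 h)
    have key2 : ∀ w, z < P.phibarJ j w → P.f j z < w := by
      intro w hw
      by_contra hle
      push_neg at hle
      have h := mono hle
      rw [hfz] at h
      exact absurd hw (not_lt.2 h)
    rcases min_lt_iff.1 h1 with h | h <;> rcases lt_max_iff.1 h2 with h' | h'
    · exact absurd (key u h) (not_lt.2 (key2 u h').le)
    · exact ⟨(min_le_left u v).trans_lt (key u h),
        (key2 v h').trans_le (le_max_right u v)⟩
    · exact ⟨(min_le_right u v).trans_lt (key v h),
        (key2 u h').trans_le (le_max_left u v)⟩
    · exact absurd (key v h) (not_lt.2 (key2 v h').le)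
  | false =>
    have anti := P.phibarJ_antitone hj hb
    have key : ∀ w, P.phibarJ j w < z → P.f j z < w := by
      intro w hw
      by_contra hle
      push_neg at hle
      have h := anti hle
      rw [hfz] at h
      exact absurd hw (not_lt.2 h)
    have key2 : ∀ w, z < P.phibarJ j w → w < P.f j z := by
      intro w hw
      by_contra hle
      push_neg at hle
      have h := anti hle
      rw [hfz] at h
      exact absurd hw (not_lt.2 h)
    rcases min_lt_iff.1 h1 with h | h <;> rcases lt_max_iff.1 h2 with h' | h'
    · exact absurd (key2 u h') (not_lt.2 (key u h).le)
    · exact ⟨(min_le_right u v).trans_lt (key2 v h'),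
        (key u h).trans_le (le_max_left u v)⟩
    · exact ⟨(min_le_left u v).trans_lt (key2 u h'),
        (key v h).trans_le (le_max_right u v)⟩
    · exact absurd (key2 v h') (not_lt.2 (key v h).le)

lemma interior_step (P : PMS) (x : ℕ → ℕ) (hx : ∀ i, x i < P.k) (y : ℝ)
    (hy : ∀ q, min (P.comp q x 0) (P.comp q x 1) < y ∧
      y < max (P.comp q x 0) (P.comp q x 1)) :
    y ∈ P.I (x 0) ∧
    (∀ q, min (P.comp q (fun i => x (i + 1)) 0) (P.comp q (fun i => x (i + 1)) 1)
        < P.T y ∧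
      P.T y < max (P.comp q (fun i => x (i + 1)) 0)
        (P.comp q (fun i => x (i + 1)) 1)) := by
  have h1 := hy 1
  have e0 : P.comp 1 x 0 = P.phibarJ (x 0) 0 := rfl
  have e1 : P.comp 1 x 1 = P.phibarJ (x 0) 1 := rfl
  rw [e0, e1] at h1
  obtain ⟨hmin, hmax⟩ := P.phibarJ_endpoints (hx 0)
  have hI : y ∈ P.I (x 0) := ⟨hmin ▸ h1.1, hmax ▸ h1.2⟩
  refine ⟨hI, fun q => ?_⟩
  have hq := hy (q + 1)
  have eq0 : P.comp (q + 1) x 0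
      = P.phibarJ (x 0) (P.comp q (fun i => x (i + 1)) 0) := rfl
  have eq1 : P.comp (q + 1) x 1
      = P.phibarJ (x 0) (P.comp q (fun i => x (i + 1)) 1) := rfl
  rw [eq0, eq1] at hq
  have hstep := P.middle_step (hx 0) hI hq.1 hq.2
  rw [P.T_eq (hx 0) hI]
  exact hstep

lemma interior_orbit (P : PMS) (n : ℕ) : ∀ (x : ℕ → ℕ), (∀ i, x i < P.k) → ∀ y : ℝ,
    (∀ q, min (P.comp q x 0) (P.comp q x 1) < y ∧
      y < max (P.comp q x 0) (P.comp q x 1)) →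
    P.T^[n] y ∈ P.I (x n) := by
  induction n with
  | zero =>
    intro x hx y hy
    exact (P.interior_step x hx y hy).1
  | succ n ih =>
    intro x hx y hy
    obtain ⟨hI0, hH⟩ := P.interior_step x hx y hy
    have h := ih (fun i => x (i + 1)) (fun i => hx (i + 1)) (P.T y) hH
    rw [Function.iterate_succ_apply]
    exact h

/-! ### Forward direction -/

lemma diam_lemma (P : PMS) (hval : P.Valid) (x : ℕ → ℕ) (hx : ∀ n, x n < P.k) :
    Tendsto (fun n => max (P.comp n x 0) (P.comp n x 1)
      - min (P.comp n x 0) (P.comp n x 1)) atTop (𝓝 0) := by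
  classical
  set m : ℕ → ℝ := fun n => min (P.comp n x 0) (P.comp n x 1) with hm
  set M : ℕ → ℝ := fun n => max (P.comp n x 0) (P.comp n x 1) with hM
  have hx' : ∀ n, ∀ i, i < n → x i < P.k := fun n i _ => hx i
  have hmem0 : ∀ n, P.comp n x 0 ∈ Icc (0 : ℝ) 1 :=
    fun n => P.comp_mem_unit n x (hx' n) (left_mem_Icc.2 zero_le_one)
  have hstep : ∀ n, P.comp (n + 1) x 0 ∈ Icc (m n) (M n) ∧
      P.comp (n + 1) x 1 ∈ Icc (m n) (M n) := by
    intro n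
    constructor
    · rw [comp_succ']
      exact P.comp_between n x (hx' n) (P.phibarJ_mem_unit (hx n) 0)
    · rw [comp_succ']
      exact P.comp_between n x (hx' n) (P.phibarJ_mem_unit (hx n) 1)
  have hmmono : Monotone m :=
    monotone_nat_of_le_succ fun n => le_min (hstep n).1.1 (hstep n).2.1
  have hManti : Antitone M :=
    antitone_nat_of_succ_le fun n => max_le (hstep n).1.2 (hstep n).2.2
  have hmbdd : BddAbove (range m) := by
    refine ⟨1, ?_⟩
    rintro - ⟨n, rfl⟩
    exact min_le_of_left_le (hmem0 n).2
  have hMbdd : BddBelow (range M) := by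
    refine ⟨0, ?_⟩
    rintro - ⟨n, rfl⟩
    exact le_max_of_le_left (hmem0 n).1
  have hmc : Tendsto m atTop (𝓝 (⨆ n, m n)) := tendsto_atTop_ciSup hmmono hmbdd
  have hMd : Tendsto M atTop (𝓝 (⨅ n, M n)) := tendsto_atTop_ciInf hManti hMbdd
  set c := ⨆ n, m n with hc
  set d := ⨅ n, M n with hd
  have hmle : ∀ n, m n ≤ c := fun n => hmmono.ge_of_tendsto hmc n
  have hMge : ∀ n, d ≤ M n := fun n => hManti.le_of_tendsto hMd n
  have hcd : c ≤ d := le_of_tendsto_of_tendsto' hmc hMd fun n => min_le_max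
  rcases eq_or_lt_of_le hcd with hcd' | hcd'
  · have h := hMd.sub hmc
    rw [← hcd', sub_self] at h
    exact h
  · exfalso
    have main : ∀ y : ℝ, c < y → y < d →
        Tendsto (fun n => P.phibarN n x) atTop (𝓝 y) := by
      intro y hyc hyd
      have hH : ∀ q, min (P.comp q x 0) (P.comp q x 1) < y ∧
          y < max (P.comp q x 0) (P.comp q x 1) :=
        fun q => ⟨(hmle q).trans_lt hyc, hyd.trans_le (hMge q)⟩
      have horb : ∀ n, P.T^[n] y ∈ P.I (x n) := fun n => P.interior_orbit n x hx y hH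
      have hyIcc : y ∈ Icc (0 : ℝ) 1 := P.I_subset_unit (hx 0) (horb 0)
      have hS0 : ∀ q, P.T^[q] y ∉ P.S0 := fun q => P.not_S0_of_mem_I (hx q) (horb q)
      have hynS : y ∉ P.S := (P.not_S_iff hyIcc).2 hS0
      have hcode : P.code y = x := funext fun n => P.idx_eq (hx n) (horb n)
      have h := hval y ⟨hyIcc, hynS⟩
      rwa [hcode] at h
    have h1 := main (c + (d - c) / 3) (by linarith) (by linarith)
    have h2 := main (c + 2 * (d - c) / 3) (by linarith) (by linarith)
    have h12 := tendsto_nhds_unique h1 h2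
    linarith

lemma exists_lim_of_valid (P : PMS) (hval : P.Valid) (x : ℕ → ℕ)
    (hx : ∀ n, x n < P.k) :
    ∃ L, Tendsto (fun n => P.phibarN n x) atTop (𝓝 L) := by
  have hD := P.diam_lemma hval x hx
  refine cauchySeq_tendsto_of_complete (cauchySeq_of_le_tendsto_0
    (fun N => max (P.comp N x 0) (P.comp N x 1) - min (P.comp N x 0) (P.comp N x 1))
    ?_ hD)
  intro p q N hp hq
  have key : ∀ r, N ≤ r → P.phibarN r x ∈
      Icc (min (P.comp N x 0) (P.comp N x 1)) (max (P.comp N x 0) (P.comp N x 1)) := by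
    intro r hr
    have hadd := P.comp_add N (r - N) x
    rw [show N + (r - N) = r from by omega] at hadd
    rw [hadd]
    exact P.comp_between N x (fun i _ => hx i)
      (P.phibarN_mem_unit _ _ fun i _ => hx _)
  exact Real.dist_le_of_mem_Icc (key p hp) (key q hq)

lemma continuousOn_of_valid (P : PMS) (hval : P.Valid) :
    ContinuousOn P.phibarInf {x : ℕ → ℕ | ∀ n, x n < P.k} := by
  intro x hx
  have hxk : ∀ n, x n < P.k := hx
  show Tendsto P.phibarInf (𝓝[{x : ℕ → ℕ | ∀ n, x n < P.k}] x) (𝓝 (P.phibarInf x))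
  rw [Metric.tendsto_nhds]
  intro ε hε
  have hD := P.diam_lemma hval x hxk
  obtain ⟨N, hN⟩ := (hD.eventually (gt_mem_nhds hε)).exists
  have hKmem : ∀ w : ℕ → ℕ, (∀ n, w n < P.k) → (∀ i, i < N → w i = x i) →
      P.phibarInf w ∈ Icc (min (P.comp N x 0) (P.comp N x 1))
        (max (P.comp N x 0) (P.comp N x 1)) := by
    intro w hw hwx
    obtain ⟨L, hL⟩ := P.exists_lim_of_valid hval w hw
    have hwL : P.phibarInf w = L := hL.limUnder_eq
    rw [hwL]
    refine isClosed_Icc.mem_of_tendsto hL (eventually_atTop.2 ⟨N, fun r hr => ?_⟩)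
    have hadd := P.comp_add N (r - N) w
    rw [show N + (r - N) = r from by omega] at hadd
    rw [hadd, P.comp_congr N (fun i hi => hwx i hi) _]
    exact P.comp_between N x (fun i _ => hxk i)
      (P.phibarN_mem_unit _ _ fun i _ => hw _)
  have hopen : IsOpen {w : ℕ → ℕ | ∀ i, i < N → w i = x i} := by
    have he : {w : ℕ → ℕ | ∀ i, i < N → w i = x i}
        = ⋂ i ∈ Finset.range N, {w : ℕ → ℕ | w i = x i} := by
      ext w
      simp [Finset.mem_range]
    rw [he]
    refine isOpen_biInter_finset fun i _ => ?_
    have he2 : {w : ℕ → ℕ | w i = x i} = (fun w : ℕ → ℕ => w i) ⁻¹' {x i} := rfl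
    rw [he2]
    exact IsOpen.preimage (continuous_apply i) (isOpen_discrete _)
  have hxmem : x ∈ {w : ℕ → ℕ | ∀ i, i < N → w i = x i} := fun i _ => rfl
  filter_upwards [mem_nhdsWithin_of_mem_nhds (hopen.mem_nhds hxmem),
    self_mem_nhdsWithin] with w hw1 hw2
  have hmw := hKmem w hw2 hw1
  have hmx := hKmem x hxk fun i _ => rfl
  calc dist (P.phibarInf w) (P.phibarInf x)
      ≤ max (P.comp N x 0) (P.comp N x 1) - min (P.comp N x 0) (P.comp N x 1) :=
        Real.dist_le_of_mem_Icc hmw hmx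
    _ < ε := hN

lemma exists_extreme (P : PMS) (hval : P.Valid) (hwd : P.WellDefined)
    (hcont : ContinuousOn P.phibarInf {x : ℕ → ℕ | ∀ n, x n < P.k}) :
    (∃ xp : ℕ → ℕ, (∀ n, xp n < P.k) ∧
      Tendsto (fun n => P.phibarN n xp) atTop (𝓝 1)) ∧
    (∃ xm : ℕ → ℕ, (∀ n, xm n < P.k) ∧
      Tendsto (fun n => P.phibarN n xm) atTop (𝓝 0)) := by
  classical
  have hK : IsCompact {x : ℕ → ℕ | ∀ n, x n < P.k} := by
    have he : {x : ℕ → ℕ | ∀ n, x n < P.k} = {x : ℕ → ℕ | ∀ n, x n ∈ Iio P.k} := rfl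
    rw [he]
    exact isCompact_pi_infinite fun n => (Set.finite_Iio P.k).isCompact
  have h0K : (fun _ : ℕ => 0) ∈ {x : ℕ → ℕ | ∀ n, x n < P.k} := by
    intro n
    show 0 < P.k
    have := P.two_le_k
    omega
  have hcode : ∀ y : ℝ, y ∈ Icc (0 : ℝ) 1 → y ∉ P.S →
      (P.code y ∈ {x : ℕ → ℕ | ∀ n, x n < P.k}) ∧ P.phibarInf (P.code y) = y := by
    intro y hy hnS
    have h0 := (P.not_S_iff hy).1 hnS
    exact ⟨fun n => P.code_lt hy h0 n, (hval y ⟨hy, hnS⟩).limUnder_eq⟩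
  have hpick : ∀ u v : ℝ, u < v → ∃ y, y ∈ Ioo u v ∧ y ∉ P.S := by
    intro u v huv
    by_contra h
    push_neg at h
    have hsub : Ioo u v ⊆ P.S := fun y hy => h y hy
    have hc := P.S_countable.mono hsub
    have h1 := hc.le_aleph0
    rw [Cardinal.mk_Ioo_real huv] at h1
    exact absurd h1 (not_le.2 Cardinal.aleph0_lt_continuum)
  have hinv : ∀ n : ℕ, (0 : ℝ) < 1 / (n + 1) ∧ (1 : ℝ) / (n + 1) ≤ 1 := by
    intro n
    constructor
    · positivity
    · rw [div_le_one (by positivity)]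
      have : (0 : ℝ) ≤ n := Nat.cast_nonneg n
      linarith
  constructor
  · obtain ⟨xp, hxpK, hmax⟩ := hK.exists_isMaxOn ⟨_, h0K⟩ hcont
    obtain ⟨L, hL⟩ := hwd xp hxpK
    have hLe : P.phibarInf xp = L := hL.limUnder_eq
    have hle1 : L ≤ 1 := le_of_tendsto hL (Eventually.of_forall fun n =>
      (P.phibarN_mem_unit n xp fun i _ => hxpK i).2)
    have hge1 : (1 : ℝ) ≤ L := by
      have hseq : Tendsto (fun n : ℕ => 1 - 1 / (n + 1 : ℝ)) atTop (𝓝 1) := by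
        have h0 := tendsto_one_div_add_atTop_nhds_zero_nat (𝕜 := ℝ)
        have h2 := (tendsto_const_nhds : Tendsto (fun _ : ℕ => (1 : ℝ)) atTop
          (𝓝 1)).sub h0
        simpa using h2
      refine le_of_tendsto hseq (Eventually.of_forall fun n => ?_)
      have hlt : (1 - 1 / (n + 1) : ℝ) < 1 := by
        have := (hinv n).1
        linarith
      obtain ⟨y, hyIoo, hynS⟩ := hpick _ _ hlt
      have hyIcc : y ∈ Icc (0 : ℝ) 1 := by
        constructor
        · have := (hinv n).2
          have := hyIoo.1
          linarith
        · exact hyIoo.2.le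
      obtain ⟨hcK, hceq⟩ := hcode y hyIcc hynS
      have hy := isMaxOn_iff.1 hmax _ hcK
      rw [hceq, hLe] at hy
      linarith [hyIoo.1]
    have hL1 : L = 1 := le_antisymm hle1 hge1
    exact ⟨xp, hxpK, hL1 ▸ hL⟩
  · obtain ⟨xm, hxmK, hmin⟩ := hK.exists_isMinOn ⟨_, h0K⟩ hcont
    obtain ⟨L, hL⟩ := hwd xm hxmK
    have hLe : P.phibarInf xm = L := hL.limUnder_eq
    have hge0 : (0 : ℝ) ≤ L := ge_of_tendsto hL (Eventually.of_forall fun n =>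
      (P.phibarN_mem_unit n xm fun i _ => hxmK i).1)
    have hle0 : L ≤ 0 := by
      have hseq : Tendsto (fun n : ℕ => 1 / (n + 1 : ℝ)) atTop (𝓝 0) :=
        tendsto_one_div_add_atTop_nhds_zero_nat
      refine ge_of_tendsto hseq (Eventually.of_forall fun n => ?_)
      obtain ⟨y, hyIoo, hynS⟩ := hpick 0 (1 / (n + 1)) (hinv n).1
      have hyIcc : y ∈ Icc (0 : ℝ) 1 := by
        constructor
        · exact hyIoo.1.le
        · have := (hinv n).2
          have := hyIoo.2
          linarith
      obtain ⟨hcK, hceq⟩ := hcode y hyIcc hynS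
      have hy := isMinOn_iff.1 hmin _ hcK
      rw [hceq, hLe] at hy
      linarith [hyIoo.2]
    have hL0 : L = 0 := le_antisymm hle0 hge0
    exact ⟨xm, hxmK, hL0 ▸ hL⟩

/-! ### Backward direction -/

lemma valid_of_criteria (P : PMS) (hwd : P.WellDefined)
    (hcont : ContinuousOn P.phibarInf {x : ℕ → ℕ | ∀ n, x n < P.k})
    (xp : ℕ → ℕ) (hxp : ∀ n, xp n < P.k)
    (hxp1 : Tendsto (fun n => P.phibarN n xp) atTop (𝓝 1))
    (xm : ℕ → ℕ) (hxm : ∀ n, xm n < P.k)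
    (hxm0 : Tendsto (fun n => P.phibarN n xm) atTop (𝓝 0)) : P.Valid := by
  classical
  intro y hy
  obtain ⟨hyIcc, hynS⟩ := hy
  have h0 := (P.not_S_iff hyIcc).1 hynS
  have hxK : ∀ n, P.code y n < P.k := fun n => P.code_lt hyIcc h0 n
  set x := P.code y with hxdef
  have hsplice : ∀ (w : ℕ → ℕ), (∀ n, w n < P.k) → ∀ Lw : ℝ,
      Tendsto (fun n => P.phibarN n w) atTop (𝓝 Lw) → ∀ N,
      P.phibarInf (fun i => if i < N then x i else w (i - N)) = P.comp N x Lw := by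
    intro w hw Lw hLw N
    have hcompc : Continuous (P.comp N x) := P.comp_continuous N x fun i _ => hxK i
    have he : ∀ q, P.phibarN (N + q) (fun i => if i < N then x i else w (i - N))
        = P.comp N x (P.phibarN q w) := by
      intro q
      rw [P.comp_add N q (fun i => if i < N then x i else w (i - N))]
      rw [P.comp_congr N (x := fun i => if i < N then x i else w (i - N)) (y := x)
        (fun i hi => by simp [hi]) _]
      congr 1
      have harg : (fun i => if N + i < N then x (N + i) else w (N + i - N)) = w := by
        funext i
        rw [if_neg (by omega)]
        congr 1
        omega
      exact congrArg (P.phibarN q) harg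
    have htail : Tendsto
        (fun q => P.phibarN (N + q) (fun i => if i < N then x i else w (i - N)))
        atTop (𝓝 (P.comp N x Lw)) := by
      have hcomp2 : Tendsto (fun q => P.comp N x (P.phibarN q w)) atTop
          (𝓝 (P.comp N x Lw)) := (hcompc.tendsto Lw).comp hLw
      have hfe : (fun q => P.phibarN (N + q)
          (fun i => if i < N then x i else w (i - N)))
          = fun q => P.comp N x (P.phibarN q w) := funext he
      rw [hfe]
      exact hcomp2
    have hfull : Tendsto
        (fun q => P.phibarN q (fun i => if i < N then x i else w (i - N)))
        atTop (𝓝 (P.comp N x Lw)) := by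
      rw [← tendsto_add_atTop_iff_nat N]
      have hfe : (fun q => P.phibarN (q + N)
          (fun i => if i < N then x i else w (i - N)))
          = fun q => P.phibarN (N + q) (fun i => if i < N then x i else w (i - N)) := by
        funext q
        rw [Nat.add_comm]
      rw [hfe]
      exact htail
    exact hfull.limUnder_eq
  have hztend : ∀ (w : ℕ → ℕ), (∀ n, w n < P.k) →
      Tendsto (fun N => (fun i => if i < N then x i else w (i - N))) atTop
        (𝓝[{x : ℕ → ℕ | ∀ n, x n < P.k}] x) := by
    intro w hw
    rw [tendsto_nhdsWithin_iff]
    constructor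
    · rw [tendsto_pi_nhds]
      intro i
      refine tendsto_nhds_of_eventually_eq (eventually_atTop.2 ⟨i + 1, fun N hN => ?_⟩)
      simp [show i < N from by omega]
    · refine Eventually.of_forall fun N => ?_
      intro n
      by_cases h : n < N
      · simpa [h] using hxK n
      · simpa [h] using hw (n - N)
  have hcwa : Tendsto P.phibarInf (𝓝[{x : ℕ → ℕ | ∀ n, x n < P.k}] x)
      (𝓝 (P.phibarInf x)) := hcont x fun n => hxK n
  have h0lim : Tendsto (fun N => P.comp N x 0) atTop (𝓝 (P.phibarInf x)) := by
    have h := hcwa.comp (hztend xm hxm)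
    have hfe : (P.phibarInf ∘ fun N => (fun i => if i < N then x i else xm (i - N)))
        = fun N => P.comp N x 0 := funext fun N => hsplice xm hxm 0 hxm0 N
    rwa [hfe] at h
  have h1lim : Tendsto (fun N => P.comp N x 1) atTop (𝓝 (P.phibarInf x)) := by
    have h := hcwa.comp (hztend xp hxp)
    have hfe : (P.phibarInf ∘ fun N => (fun i => if i < N then x i else xp (i - N)))
        = fun N => P.comp N x 1 := funext fun N => hsplice xp hxp 1 hxp1 N
    rwa [hfe] at h
  have hyin : ∀ N, y ∈ Icc (min (P.comp N x 0) (P.comp N x 1))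
      (max (P.comp N x 0) (P.comp N x 1)) := by
    intro N
    have h1 : P.comp N x (P.T^[N] y) = y := P.comp_code hyIcc h0 N
    rw [← h1]
    exact P.comp_between N x (fun i _ => hxK i) (P.iter_mem hyIcc h0 N)
  have hminlim : Tendsto (fun N => min (P.comp N x 0) (P.comp N x 1)) atTop
      (𝓝 (P.phibarInf x)) := by
    have h := h0lim.min h1lim
    rwa [min_self] at h
  have hmaxlim : Tendsto (fun N => max (P.comp N x 0) (P.comp N x 1)) atTop
      (𝓝 (P.phibarInf x)) := by
    have h := h0lim.max h1lim
    rwa [max_self] at h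
  have hyL : y = P.phibarInf x := by
    have hle : y ≤ P.phibarInf x :=
      ge_of_tendsto hmaxlim (Eventually.of_forall fun N => (hyin N).2)
    have hge : P.phibarInf x ≤ y :=
      le_of_tendsto hminlim (Eventually.of_forall fun N => (hyin N).1)
    linarith
  have hphin : (fun n => P.phibarN n x) = fun n => P.comp n x 0 :=
    funext fun n => P.phibarN_eq_comp n x
  show Tendsto (fun n => P.phibarN n x) atTop (𝓝 y)
  rw [hphin, hyL]
  exact h0lim

end PMS



/-- **Validity criterion via continuity.** In the piecewise monotone setting, the
φ-expansion is valid if and only if `φ̄_∞` is well-defined on all of `A^ℕ`, the map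
`φ̄_∞ : A^ℕ → [0,1]` is continuous (`A^ℕ` carrying the product topology), and there
exist strings `x⁺, x⁻ ∈ A^ℕ` with `φ̄_∞(x⁺) = 1` and `φ̄_∞(x⁻) = 0`. -/
theorem validity_iff_continuous (P : PMS) :
    P.Valid ↔
      (P.WellDefined ∧
        ContinuousOn P.phibarInf {x : ℕ → ℕ | ∀ n, x n < P.k} ∧
        (∃ xp : ℕ → ℕ, (∀ n, xp n < P.k) ∧
          Filter.Tendsto (fun n => P.phibarN n xp) Filter.atTop (nhds 1)) ∧
        (∃ xm : ℕ → ℕ, (∀ n, xm n < P.k) ∧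
          Filter.Tendsto (fun n => P.phibarN n xm) Filter.atTop (nhds 0))) := by
  constructor
  · intro hval
    have hwd : P.WellDefined := fun x hx => P.exists_lim_of_valid hval x hx
    have hcont := P.continuousOn_of_valid hval
    obtain ⟨hp, hm⟩ := P.exists_extreme hval hwd hcont
    exact ⟨hwd, hcont, hp, hm⟩
  · rintro ⟨hwd, hcont, ⟨xp, hxp, hxp1⟩, ⟨xm, hxm, hxm0⟩⟩
    exact P.valid_of_criteria hwd hcont xp hxp hxp1 xm hxm hxm0
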